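/- Suppose Assumption (A) holds, r(n−1) < (3/7)(1 − 1/α), and r(n−1) ≤ 1/10. Then for every sign vector s ∈ {−1,+1}^{n−1}, the first component of f(Q^(s)) is positive, i.e. f(Q^(s))₁ = C₁ P^(s)₂/(C₁ − P^(s)₁) + 1 > 0. -/

import Mathlib

open Matrix Polynomial Finset

noncomputable section

/-- The companion-type matrix of the `n`-dimensional border-collision normal form:
`(i,1)` entry is `-a i`, `(i,i+1)` entries are `1`, all other entries `0`. -/
def bcMat (n : ℕ) (a : Fin n → ℝ) : Matrix (Fin n) (Fin n) ℝ :=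
  Matrix.of fun i j =>
    (if (j : ℕ) = 0 then -a i else 0) + (if (j : ℕ) = (i : ℕ) + 1 then 1 else 0)

/-- The vector `b = (1,0,…,0)`. -/
def bcVec (n : ℕ) : Fin n → ℝ := fun i => if (i : ℕ) = 0 then 1 else 0

/-- `ρ` is an eigenvalue of `M` (of algebraic multiplicity one, automatic when `|ρ| > r`)
and all remaining eigenvalues of `M` over `ℂ`, counted with multiplicity,
have modulus at most `r`. -/
def specA (n : ℕ) (M : Matrix (Fin n) (Fin n) ℝ) (ρ r : ℝ) : Prop :=
  ∃ lam : Fin (n - 1) → ℂ,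
    (∀ j, ‖lam j‖ ≤ r) ∧
      M.charpoly.map (algebraMap ℝ ℂ) =
        (X - C (ρ : ℂ)) * ∏ j : Fin (n - 1), (X - C (lam j))

/-- Assumption (A). -/
def assumptionA (n : ℕ) (aL aR : Fin n → ℝ) (α β r : ℝ) : Prop :=
  1 < α ∧ 1 < β ∧ 0 < r ∧ r < 1 ∧
    specA n (bcMat n aL) α r ∧ specA n (bcMat n aR) (-β) r

/-- The border-collision normal form map `f`. -/
def bcf (n : ℕ) (aL aR : Fin n → ℝ) (x : Fin n → ℝ) : Fin n → ℝ :=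
  if ∀ i : Fin n, (i : ℕ) = 0 → x i ≤ 0 then (bcMat n aL).mulVec x + bcVec n
  else (bcMat n aR).mulVec x + bcVec n

/-- The fixed point `Y = (I − A_L)⁻¹ b`. -/
def Ypt (n : ℕ) (aL : Fin n → ℝ) : Fin n → ℝ :=
  ((1 - bcMat n aL)⁻¹).mulVec (bcVec n)

/-- The row vector `u = (α^{n-1}, …, α, 1)`. -/
def uvec (n : ℕ) (α : ℝ) : Fin n → ℝ := fun i => α ^ (n - 1 - (i : ℕ))

/-- The hyperplane `E = {x : uᵀ(x − Y) = 0}`. -/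
def Eset (n : ℕ) (aL : Fin n → ℝ) (α : ℝ) : Set (Fin n → ℝ) :=
  {x | ∑ i : Fin n, uvec n α i * (x i - Ypt n aL i) = 0}

/-- The slab `H = {x : |x_i| ≤ M_i r^{i-1}, i = 2,…,n}` with
`M_i = (2α/(α−1))·binom(n−1,i−1)`. -/
def Hset (n : ℕ) (α r : ℝ) : Set (Fin n → ℝ) :=
  {x | ∀ i : Fin n, 1 ≤ (i : ℕ) →
    |x i| ≤ 2 * α / (α - 1) * ((n - 1).choose (i : ℕ) : ℝ) * r ^ (i : ℕ)}

/-- The first component `C₁` of the point `C`. -/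
def Cfirst (n : ℕ) (aL aR : Fin n → ℝ) (α : ℝ) : ℝ :=
  (1 - 1 / (1 - bcMat n aL).det +
      1 / (1 - bcMat n aL).det *
        ∑ k ∈ univ.filter (fun k : Fin n => 1 ≤ (k : ℕ)),
          α ^ (-((k : ℕ) : ℤ)) *
            ∑ j ∈ univ.filter (fun j : Fin n => (k : ℕ) ≤ (j : ℕ)), aL j) /
    ∑ i : Fin n, α ^ (-((i : ℕ) : ℤ)) * aR i

/-- The point `C = (C₁, 0, …, 0)`. -/
def Cpt (n : ℕ) (aL aR : Fin n → ℝ) (α : ℝ) : Fin n → ℝ :=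
  fun i => if (i : ℕ) = 0 then Cfirst n aL aR α else 0

/-- The polytope `Ω = Conv({C} ∪ (E ∩ H))`. -/
def OmegaSet (n : ℕ) (aL aR : Fin n → ℝ) (α r : ℝ) : Set (Fin n → ℝ) :=
  convexHull ℝ ({Cpt n aL aR α} ∪ (Eset n aL α ∩ Hset n α r))

/-- The cone `Ψ` of scalar multiples of vectors `(1, m₁, …, m_{n-1})` with
`|m_i| ≤ N_i r^{i-1}`, `N_i = ((min(α,β)−1)/2)·binom(n−1,i−1)`. -/
def PsiSet (n : ℕ) (α β r : ℝ) : Set (Fin n → ℝ) :=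
  {x | ∃ γ : ℝ, ∃ v : Fin n → ℝ,
    (∀ i : Fin n, (i : ℕ) = 0 → v i = 1) ∧
    (∀ i : Fin n, 1 ≤ (i : ℕ) →
      |v i| ≤ (min α β - 1) / 2 * ((n - 1).choose ((i : ℕ) - 1) : ℝ) * r ^ ((i : ℕ) - 1)) ∧
    x = γ • v}

/-- `P` is the vertex `P^(s)`: the point of `E` whose `i`-th component, `i = 2,…,n`,
is `s_{i-1}·M_i r^{i-1}`. -/
def isVertexP (n : ℕ) (aL : Fin n → ℝ) (α r : ℝ) (s : Fin (n - 1) → ℝ)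
    (P : Fin n → ℝ) : Prop :=
  P ∈ Eset n aL α ∧
    ∀ i : Fin n, ∀ _h : 1 ≤ (i : ℕ),
      P i = s ⟨(i : ℕ) - 1, by have := i.isLt; omega⟩ *
        (2 * α / (α - 1) * ((n - 1).choose (i : ℕ) : ℝ) * r ^ (i : ℕ))

/-- The `k`-th elementary symmetric polynomial of `η`. -/
def esym {m : ℕ} (η : Fin m → ℂ) (k : ℕ) : ℂ :=
  ∑ t ∈ powersetCard k univ, ∏ j ∈ t, η j

end

noncomputable section AuxBC

def gMat {R : Type*} [CommRing R] (n : ℕ) (a : Fin n → R) : Matrix (Fin n) (Fin n) R :=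
  Matrix.of fun i j =>
    (if (j : ℕ) = 0 then -a i else 0) + (if (j : ℕ) = (i : ℕ) + 1 then 1 else 0)

theorem det_gMat {R : Type*} [CommRing R] : ∀ (n : ℕ) (x : R) (a : Fin (n+1) → R),
    (x • (1 : Matrix (Fin (n+1)) (Fin (n+1)) R) - gMat (n+1) a).det
      = x ^ (n+1) + ∑ i : Fin (n+1), a i * x ^ (n - (i : ℕ)) := by
  intro n
  induction n with
  | zero =>
    intro x a
    rw [Matrix.det_fin_one]
    simp [gMat]
  | succ n ih =>
    intro x a
    set A := x • (1 : Matrix (Fin (n+2)) (Fin (n+2)) R) - gMat (n+2) a with hA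
    have hlast : ((Fin.last (n+1) : Fin (n+2)) : ℕ) = n+1 := rfl
    have entry : ∀ i j : Fin (n+2), A i j =
        (if i = j then x else 0) + (if (j:ℕ) = 0 then a i else 0)
          - (if (j:ℕ) = (i:ℕ)+1 then 1 else 0) := by
      intro i j
      simp only [hA, gMat, Matrix.sub_apply, Matrix.smul_apply, Matrix.one_apply, Matrix.of_apply, smul_eq_mul]
      by_cases h : i = j <;> by_cases h2 : (j:ℕ) = 0 <;> simp [h, h2] <;> ring
    rw [Matrix.det_succ_row A (Fin.last (n+1))]
    set f : Fin (n+2) → R := fun j =>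
      (-1) ^ ((Fin.last (n+1) : ℕ) + (j:ℕ)) * A (Fin.last (n+1)) j *
        (A.submatrix (Fin.last (n+1)).succAbove j.succAbove).det with hf
    have hzero : ∀ j : Fin (n+2), j ∉ ({0, Fin.last (n+1)} : Finset (Fin (n+2))) → f j = 0 := by
      intro j hj
      simp only [Finset.mem_insert, Finset.mem_singleton] at hj
      push_neg at hj
      have h1 : ¬ (Fin.last (n+1) = j) := fun h => hj.2 h.symm
      have h2 : ¬ ((j:ℕ) = 0) := fun h => hj.1 (Fin.ext h)
      have h3 : ¬ ((j:ℕ) = (n+1)+1) := by have := j.isLt; omega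
      simp [hf, entry, h1, h2, hlast, h3, hj.1]
    have h01 : (0 : Fin (n+2)) ≠ Fin.last (n+1) := by
      intro h
      have := congrArg (Fin.val) h
      simp [hlast] at this
    have hpair : ∑ j : Fin (n+2), f j = f 0 + f (Fin.last (n+1)) := by
      rw [← Finset.sum_pair h01]
      exact (Finset.sum_subset (Finset.subset_univ _) (fun x _ hx => hzero x hx)).symm
    rw [hpair]
    -- compute f 0
    have hA0 : A (Fin.last (n+1)) 0 = a (Fin.last (n+1)) := by
      have : ¬ ((Fin.last (n+1) : Fin (n+2)) = 0) := fun h => h01 h.symm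
      simp [entry, this, hlast]
    have hminor0 : (A.submatrix (Fin.last (n+1)).succAbove (0 : Fin (n+2)).succAbove).det = (-1)^(n+1) := by
      have hent : ∀ k l : Fin (n+1),
          A.submatrix (Fin.last (n+1)).succAbove (0 : Fin (n+2)).succAbove k l =
            (if (k:ℕ) = (l:ℕ)+1 then x else 0) - (if l = k then 1 else 0) := by
        intro k l
        have hrow : (Fin.last (n+1)).succAbove k = k.castSucc := by rw [Fin.succAbove_last]
        have hcol : (0 : Fin (n+2)).succAbove l = l.succ := rfl
        rw [Matrix.submatrix_apply, hrow, hcol, entry]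
        have e1 : (k.castSucc = l.succ) ↔ ((k:ℕ) = (l:ℕ)+1) := by
          rw [Fin.ext_iff]; simp
        have e2 : ¬ ((l.succ : ℕ) = 0) := by simp
        have e3 : ((l.succ : ℕ) = (k.castSucc : ℕ) + 1) ↔ (l = k) := by
          rw [Fin.ext_iff]; simp
        by_cases h2 : (k:ℕ) = (l:ℕ)+1 <;> by_cases h : l = k
        · exfalso; rw [h] at h2; omega
        · rw [if_pos (e1.mpr h2), if_neg e2, if_neg (fun hh => h (e3.mp hh)), if_pos h2, if_neg h]; ring
        · rw [if_neg (fun hh => h2 (e1.mp hh)), if_neg e2, if_pos (e3.mpr h), if_neg h2, if_pos h]; ring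
        · rw [if_neg (fun hh => h2 (e1.mp hh)), if_neg e2, if_neg (fun hh => h (e3.mp hh)), if_neg h2, if_neg h]; ring
      have htri : (A.submatrix (Fin.last (n+1)).succAbove (0 : Fin (n+2)).succAbove).BlockTriangular OrderDual.toDual := by
        intro k l hkl
        simp only [OrderDual.toDual_lt_toDual] at hkl
        have hk : (k:ℕ) < (l:ℕ) := hkl
        rw [hent]
        have : ¬ ((k:ℕ) = (l:ℕ)+1) := by omega
        have h2 : ¬ (l = k) := by intro h; rw [h] at hk; omega
        simp [this, h2]
      rw [Matrix.det_of_lowerTriangular _ htri]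
      have hdiag : ∀ k : Fin (n+1),
          A.submatrix (Fin.last (n+1)).succAbove (0 : Fin (n+2)).succAbove k k = -1 := by
        intro k
        rw [hent]
        have : ¬ ((k:ℕ) = (k:ℕ)+1) := by omega
        simp [this]
      rw [Finset.prod_congr rfl (fun k _ => hdiag k)]
      simp
    -- compute f last
    have hAl : A (Fin.last (n+1)) (Fin.last (n+1)) = x := by
      have h2 : ¬ (((Fin.last (n+1) : Fin (n+2)):ℕ) = 0) := by simp [hlast]
      have h3 : ¬ (((Fin.last (n+1) : Fin (n+2)):ℕ) = ((Fin.last (n+1) : Fin (n+2)):ℕ)+1) := by omega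
      simp [entry, h2, h3]
    have hminorl : (A.submatrix (Fin.last (n+1)).succAbove (Fin.last (n+1)).succAbove) =
        x • (1 : Matrix (Fin (n+1)) (Fin (n+1)) R) - gMat (n+1) (fun k => a k.castSucc) := by
      ext k l
      have hrow : (Fin.last (n+1)).succAbove k = k.castSucc := by rw [Fin.succAbove_last]
      have hrowl : (Fin.last (n+1)).succAbove l = l.castSucc := by rw [Fin.succAbove_last]
      rw [Matrix.submatrix_apply, hrow, hrowl, entry]
      have e1 : (k.castSucc = l.castSucc) ↔ (k = l) := by rw [Fin.ext_iff, Fin.ext_iff]; simp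
      simp only [Matrix.sub_apply, Matrix.smul_apply, Matrix.one_apply, gMat, Matrix.of_apply, smul_eq_mul, Fin.coe_castSucc]
      by_cases h : k = l <;> by_cases h2 : (l:ℕ) = 0 <;> simp [e1, h, h2] <;> ring
    have hsq : ((-1 : R)) ^ (n+1) * ((-1 : R)) ^ (n+1) = 1 := by
      rw [← pow_add]
      exact Even.neg_one_pow ⟨n+1, by ring⟩
    have hfl : f (Fin.last (n+1)) = x * (x ^ (n+1) + ∑ i : Fin (n+1), a i.castSucc * x ^ (n - (i:ℕ))) := by
      simp only [hf]
      rw [hminorl, ih x (fun k => a k.castSucc), hAl, hlast]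
      linear_combination (x * (x ^ (n+1) + ∑ i : Fin (n+1), a i.castSucc * x ^ (n - (i:ℕ)))) * hsq
    have hf0 : f 0 = a (Fin.last (n+1)) := by
      simp only [hf]
      rw [hA0, hminor0, hlast, Fin.val_zero, add_zero]
      linear_combination (a (Fin.last (n+1))) * hsq
    rw [hf0, hfl, Fin.sum_univ_castSucc (f := fun i : Fin (n+2) => a i * x ^ (n + 1 - (i:ℕ)))]
    have hstep : ∀ i : Fin (n+1), x * (a i.castSucc * x ^ (n - (i:ℕ))) = a i.castSucc * x ^ (n + 1 - ((i.castSucc : Fin (n+2)):ℕ)) := by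
      intro i
      have : n + 1 - ((i.castSucc : Fin (n+2)):ℕ) = (n - (i:ℕ)) + 1 := by
        have := i.isLt; simp [Fin.coe_castSucc]; omega
      rw [this, pow_succ]
      ring
    rw [mul_add, Finset.mul_sum]
    rw [Finset.sum_congr rfl (fun i _ => hstep i)]
    simp [hlast]
    ring

theorem bcMat_eq_gMat (n : ℕ) (a : Fin n → ℝ) : bcMat n a = gMat n a := rfl

theorem charpoly_bcMat (n : ℕ) (hn : 1 ≤ n) (a : Fin n → ℝ) :
    (bcMat n a).charpoly = X ^ n + ∑ i : Fin n, C (a i) * X ^ (n - 1 - (i : ℕ)) := by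
  obtain ⟨m, rfl⟩ : ∃ m, n = m + 1 := ⟨n - 1, by omega⟩
  have hcm : charmatrix (bcMat (m+1) a) =
      (X : ℝ[X]) • (1 : Matrix (Fin (m+1)) (Fin (m+1)) ℝ[X]) - gMat (m+1) (fun i => C (a i)) := by
    refine Matrix.ext fun i j => ?_
    rw [charmatrix_apply]
    simp only [Matrix.diagonal_apply, Matrix.sub_apply, Matrix.smul_apply, Matrix.one_apply,
      gMat, bcMat, Matrix.of_apply, smul_eq_mul, mul_ite, mul_one, mul_zero,
      map_add, apply_ite C, map_neg, Polynomial.C_1, map_zero]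
  have : (bcMat (m+1) a).charpoly = (charmatrix (bcMat (m+1) a)).det := rfl
  rw [this, hcm, det_gMat m X (fun i => C (a i))]
  norm_num

theorem eval_charpoly_bcMat (n : ℕ) (hn : 1 ≤ n) (a : Fin n → ℝ) (x : ℝ) :
    ((bcMat n a).charpoly).eval x = x ^ n + ∑ i : Fin n, a i * x ^ (n - 1 - (i : ℕ)) := by
  rw [charpoly_bcMat n hn a]
  simp [eval_finset_sum]

theorem eval_charpoly_complex {n : ℕ} {M : Matrix (Fin n) (Fin n) ℝ} {ρ r : ℝ}
    (h : specA n M ρ r) (x : ℝ) :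
    ∃ lam : Fin (n-1) → ℂ, (∀ j, ‖lam j‖ ≤ r) ∧
      ((M.charpoly.eval x : ℝ) : ℂ) = ((x : ℂ) - ρ) * ∏ j : Fin (n-1), ((x:ℂ) - lam j) := by
  obtain ⟨lam, hlam, hfac⟩ := h
  refine ⟨lam, hlam, ?_⟩
  have h1 : ((M.charpoly.eval x : ℝ) : ℂ) = (M.charpoly.map (algebraMap ℝ ℂ)).eval ((x : ℝ) : ℂ) := by
    rw [Polynomial.eval_map, show ((x:ℝ):ℂ) = algebraMap ℝ ℂ x from rfl,
      Polynomial.eval₂_at_apply]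
    rfl
  rw [h1, hfac]
  simp [Polynomial.eval_prod]

end AuxBC

noncomputable section AuxBC2

theorem sum_aL_alpha {n : ℕ} {aL : Fin n → ℝ} {α r : ℝ} (hn : 1 ≤ n)
    (hs : specA n (bcMat n aL) α r) :
    ∑ i : Fin n, aL i * α ^ (n - 1 - (i:ℕ)) = -α ^ n := by
  obtain ⟨lam, _, hev⟩ := eval_charpoly_complex hs α
  rw [eval_charpoly_bcMat n hn] at hev
  have hz : ((α:ℂ) - (α:ℝ)) = 0 := by ring
  rw [hz, zero_mul] at hev
  have := Complex.ofReal_eq_zero.mp hev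
  linarith

theorem det_one_sub_bcMat (n : ℕ) (hn : 1 ≤ n) (a : Fin n → ℝ) :
    (1 - bcMat n a).det = 1 + ∑ i : Fin n, a i := by
  obtain ⟨m, rfl⟩ : ∃ m, n = m+1 := ⟨n-1, by omega⟩
  have h1 : (1 : Matrix (Fin (m+1)) (Fin (m+1)) ℝ) - bcMat (m+1) a
      = (1:ℝ) • 1 - gMat (m+1) a := by rw [one_smul]; rfl
  rw [h1, det_gMat]
  simp

theorem det_one_sub_ne {n : ℕ} {aL : Fin n → ℝ} {α r : ℝ} (hn : 1 ≤ n) (hα : 1 < α)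
    (hr : r < 1) (hs : specA n (bcMat n aL) α r) :
    (1 - bcMat n aL).det ≠ 0 := by
  obtain ⟨lam, hlam, hev⟩ := eval_charpoly_complex hs 1
  rw [eval_charpoly_bcMat n hn] at hev
  have hdet : (1 - bcMat n aL).det = (1:ℝ)^n + ∑ i : Fin n, aL i * (1:ℝ) ^ (n-1-(i:ℕ)) := by
    rw [det_one_sub_bcMat n hn]; simp
  rw [hdet]
  intro h0
  rw [h0] at hev
  have h1 : ((1:ℝ):ℂ) - (α:ℝ) ≠ 0 := by
    intro h
    have h2 : ((1-α : ℝ):ℂ) = 0 := by push_cast at h ⊢; linear_combination h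
    exact absurd (Complex.ofReal_eq_zero.mp h2) (by intro hh; linarith)
  have h2 : ∀ j, ((1:ℝ):ℂ) - lam j ≠ 0 := by
    intro j h
    have hl1 : lam j = 1 := by
      have := sub_eq_zero.mp h
      simpa using this.symm
    have := hlam j
    rw [hl1] at this
    simp at this
    linarith
  exact (mul_ne_zero h1 (Finset.prod_ne_zero_iff.mpr (fun j _ => h2 j))) (by
    rw [← hev]; simp)

end AuxBC2

noncomputable section AuxBC3

theorem evalR_ge {n : ℕ} {aR : Fin n → ℝ} {β r α : ℝ} (hn : 1 ≤ n)
    (hs : specA n (bcMat n aR) (-β) r) (hα : 1 < α) (hβ : 0 < β) (hr0 : 0 < r) (hr1 : r < 1) :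
    (α + β) * (α - r) ^ (n-1) ≤ α ^ n + ∑ i : Fin n, aR i * α ^ (n - 1 - (i:ℕ)) := by
  set g := (bcMat n aR).charpoly with hg
  have heval : ∀ x : ℝ, g.eval x = x ^ n + ∑ i : Fin n, aR i * x ^ (n - 1 - (i:ℕ)) :=
    fun x => eval_charpoly_bcMat n hn aR x
  -- no zeros at or beyond α
  have hnz : ∀ x : ℝ, α ≤ x → g.eval x ≠ 0 := by
    intro x hx h0
    obtain ⟨lam, hlam, hev⟩ := eval_charpoly_complex hs x
    rw [h0] at hev
    have h1 : ((x:ℂ) - ((-β : ℝ):ℂ)) ≠ 0 := by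
      intro h
      have h2 : ((x + β : ℝ):ℂ) = 0 := by push_cast at h ⊢; linear_combination h
      have := Complex.ofReal_eq_zero.mp h2
      linarith
    have h2 : ∀ j, ((x:ℂ) - lam j) ≠ 0 := by
      intro j h
      have hlx : lam j = (x:ℂ) := (sub_eq_zero.mp h).symm
      have := hlam j
      rw [hlx] at this
      rw [Complex.norm_real, Real.norm_eq_abs, abs_of_pos (by linarith : (0:ℝ) < x)] at this
      linarith
    exact (mul_ne_zero h1 (Finset.prod_ne_zero_iff.mpr (fun j _ => h2 j))) (by
      rw [← hev]; simp)
  -- positive at large x0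
  set K := ∑ i : Fin n, |aR i| with hK
  have hK0 : 0 ≤ K := Finset.sum_nonneg (fun i _ => abs_nonneg _)
  set x0 := max α (K + 1) with hx0
  have hx0α : α ≤ x0 := le_max_left _ _
  have hx01 : (1:ℝ) ≤ x0 := by linarith
  have hx0K : K + 1 ≤ x0 := le_max_right _ _
  have hgx0 : 0 < g.eval x0 := by
    rw [heval]
    have hbound : ∀ i : Fin n, -(|aR i| * x0 ^ (n-1)) ≤ aR i * x0 ^ (n - 1 - (i:ℕ)) := by
      intro i
      have h1 : |aR i * x0 ^ (n - 1 - (i:ℕ))| ≤ |aR i| * x0 ^ (n-1) := by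
        rw [abs_mul, abs_pow, abs_of_nonneg (by linarith : (0:ℝ) ≤ x0)]
        exact mul_le_mul_of_nonneg_left (pow_le_pow_right₀ hx01 (by omega)) (abs_nonneg _)
      linarith [neg_abs_le (aR i * x0 ^ (n - 1 - (i:ℕ)))]
    have hsum : -(K * x0 ^ (n-1)) ≤ ∑ i : Fin n, aR i * x0 ^ (n - 1 - (i:ℕ)) := by
      rw [hK, Finset.sum_mul, ← Finset.sum_neg_distrib]
      exact Finset.sum_le_sum (fun i _ => hbound i)
    have hxn : x0 ^ n = x0 ^ (n-1) * x0 := by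
      rw [← pow_succ]; congr 1; omega
    have hp : 0 < x0 ^ (n-1) := pow_pos (by linarith) _
    nlinarith
  -- sign at α via IVT
  have hgα : 0 < g.eval α := by
    rcases lt_trichotomy (g.eval α) 0 with hneg | hzero | hpos
    · exfalso
      have hc : ContinuousOn (fun x => g.eval x) (Set.Icc α x0) := g.continuous.continuousOn
      have hm : (0:ℝ) ∈ Set.Icc (g.eval α) (g.eval x0) := ⟨hneg.le, hgx0.le⟩
      obtain ⟨c, hc1, hc2⟩ := intermediate_value_Icc hx0α hc hm
      exact hnz c hc1.1 hc2
    · exact absurd hzero (hnz α le_rfl)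
    · exact hpos
  -- modulus lower bound
  obtain ⟨lam, hlam, hev⟩ := eval_charpoly_complex hs α
  have habs : (α + β) * (α - r) ^ (n-1) ≤ |g.eval α| := by
    have h1 : ‖((g.eval α : ℝ):ℂ)‖ = |g.eval α| := by rw [Complex.norm_real, Real.norm_eq_abs]
    rw [← h1, hg, hev, norm_mul, norm_prod]
    have h2 : ‖(α:ℂ) - ((-β:ℝ):ℂ)‖ = α + β := by
      have : ((α:ℂ) - ((-β:ℝ):ℂ)) = ((α + β : ℝ):ℂ) := by push_cast; ring
      rw [this, Complex.norm_real, Real.norm_eq_abs, abs_of_pos (by linarith)]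
    rw [h2]
    have h3 : (α - r) ^ (n-1) ≤ ∏ j : Fin (n-1), ‖(α:ℂ) - lam j‖ := by
      have := Finset.prod_le_prod (s := (Finset.univ : Finset (Fin (n-1))))
        (f := fun _ => α - r) (g := fun j => ‖(α:ℂ) - lam j‖)
        (fun j _ => by show (0:ℝ) ≤ α - r; linarith) (fun j _ => by
          show α - r ≤ ‖(α:ℂ) - lam j‖
          have h4 := norm_sub_norm_le (α:ℂ) (lam j)
          rw [Complex.norm_real, Real.norm_eq_abs, abs_of_pos (by linarith : (0:ℝ) < α)] at h4
          linarith [hlam j])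
      simpa using this
    exact mul_le_mul_of_nonneg_left h3 (by linarith)
  rw [← heval α]
  rw [abs_of_pos hgα] at habs
  exact habs

end AuxBC3

noncomputable section AuxBC4

theorem uvec_vecMul {n : ℕ} {aL : Fin n → ℝ} {α r : ℝ} (hn : 1 ≤ n)
    (hs : specA n (bcMat n aL) α r) (j : Fin n) :
    ∑ i : Fin n, uvec n α i * (1 - bcMat n aL) i j = (1 - α) * uvec n α j := by
  have hentry : ∀ i : Fin n, (1 - bcMat n aL) i j =
      (if i = j then 1 else 0) - ((if (j:ℕ) = 0 then -aL i else 0)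
        + (if (j:ℕ) = (i:ℕ)+1 then 1 else 0)) := by
    intro i
    simp [bcMat, Matrix.sub_apply, Matrix.one_apply]
  by_cases hj : (j:ℕ) = 0
  · have hsum : ∀ i : Fin n, uvec n α i * (1 - bcMat n aL) i j =
        (if i = j then uvec n α i else 0) + uvec n α i * aL i := by
      intro i
      rw [hentry i]
      have : ¬ ((j:ℕ) = (i:ℕ)+1) := by omega
      rw [if_pos hj, if_neg this]
      split <;> ring
    rw [Finset.sum_congr rfl (fun i _ => hsum i), Finset.sum_add_distrib,
      Finset.sum_ite_eq' Finset.univ j (uvec n α)]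
    have h2 : ∑ i : Fin n, uvec n α i * aL i = -α ^ n := by
      rw [← sum_aL_alpha hn hs]
      exact Finset.sum_congr rfl (fun i _ => by simp only [uvec]; ring)
    rw [if_pos (Finset.mem_univ j), h2]
    simp only [uvec, hj]
    have hpow : α ^ (n - 1 - 0) * α = α ^ n := by
      rw [← pow_succ]; congr 1; omega
    nlinarith [hpow]
  · -- j ≥ 1
    have hj1 : 1 ≤ (j:ℕ) := by omega
    have hjn : (j:ℕ) ≤ n - 1 := by have := j.isLt; omega
    set i0 : Fin n := ⟨(j:ℕ) - 1, by have := j.isLt; omega⟩ with hi0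
    have hsum : ∀ i : Fin n, uvec n α i * (1 - bcMat n aL) i j =
        (if i = j then uvec n α i else 0) - (if i = i0 then uvec n α i else 0) := by
      intro i
      rw [hentry i, if_neg hj]
      have hiff : ((j:ℕ) = (i:ℕ)+1) ↔ i = i0 := by
        rw [Fin.ext_iff, hi0]
        simp
        omega
      by_cases h : i = i0
      · have hji : (j:ℕ) = (i:ℕ)+1 := hiff.mpr h
        have hij : ¬ (i = j) := by
          intro he
          rw [← he] at hji
          omega
        rw [if_neg hij, if_pos hji, if_pos h, if_neg hij]
        ring
      · have hji : ¬ ((j:ℕ) = (i:ℕ)+1) := fun hh => h (hiff.mp hh)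
        rw [if_neg hji, if_neg h]
        by_cases h2 : i = j
        · rw [if_pos h2, if_pos h2]
          ring
        · rw [if_neg h2, if_neg h2]
          ring
    rw [Finset.sum_congr rfl (fun i _ => hsum i), Finset.sum_sub_distrib,
      Finset.sum_ite_eq' Finset.univ j (uvec n α),
      Finset.sum_ite_eq' Finset.univ i0 (uvec n α),
      if_pos (Finset.mem_univ j), if_pos (Finset.mem_univ i0)]
    have hval : uvec n α i0 = α * uvec n α j := by
      simp only [uvec, hi0]
      have h1 : n - 1 - ((j:ℕ) - 1) = (n - 1 - (j:ℕ)) + 1 := by omega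
      rw [h1, pow_succ]
      ring
    rw [hval]
    ring

theorem uvec_dot_Ypt {n : ℕ} {aL : Fin n → ℝ} {α r : ℝ} (hn : 1 ≤ n) (hα : 1 < α)
    (hr : r < 1) (hs : specA n (bcMat n aL) α r) :
    ∑ i : Fin n, uvec n α i * Ypt n aL i = α ^ (n-1) / (1 - α) := by
  set B := 1 - bcMat n aL with hB
  have hdet : IsUnit B.det := isUnit_iff_ne_zero.mpr (det_one_sub_ne hn hα hr hs)
  have hBY : B.mulVec (Ypt n aL) = bcVec n := by
    rw [Ypt, Matrix.mulVec_mulVec, Matrix.mul_nonsing_inv _ hdet, Matrix.one_mulVec]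
  have hmain : (1 - α) * (∑ i : Fin n, uvec n α i * Ypt n aL i) = α ^ (n-1) := by
    calc (1 - α) * (∑ i : Fin n, uvec n α i * Ypt n aL i)
        = ∑ j : Fin n, ((1 - α) * uvec n α j) * Ypt n aL j := by
          rw [Finset.mul_sum]; exact Finset.sum_congr rfl (fun j _ => by ring)
      _ = ∑ j : Fin n, (∑ i : Fin n, uvec n α i * B i j) * Ypt n aL j :=
          Finset.sum_congr rfl (fun j _ => by rw [uvec_vecMul hn hs j])
      _ = ∑ j : Fin n, ∑ i : Fin n, uvec n α i * B i j * Ypt n aL j :=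
          Finset.sum_congr rfl (fun j _ => by rw [Finset.sum_mul])
      _ = ∑ i : Fin n, ∑ j : Fin n, uvec n α i * B i j * Ypt n aL j := Finset.sum_comm
      _ = ∑ i : Fin n, uvec n α i * (B.mulVec (Ypt n aL) i) := by
          refine Finset.sum_congr rfl (fun i _ => ?_)
          rw [Matrix.mulVec, dotProduct, Finset.mul_sum]
          exact Finset.sum_congr rfl (fun j _ => by ring)
      _ = ∑ i : Fin n, uvec n α i * bcVec n i := by rw [hBY]
      _ = α ^ (n-1) := by
          simp only [bcVec]
          have h0 : (⟨0, by omega⟩ : Fin n) ∈ Finset.univ := Finset.mem_univ _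
          rw [Finset.sum_eq_single (⟨0, by omega⟩ : Fin n)]
          · simp [uvec]
          · intro b _ hb
            have : ¬ ((b:ℕ) = 0) := by
              intro h
              exact hb (Fin.ext h)
            simp [this]
          · intro h
            exact absurd h0 h
  have hne : (1:ℝ) - α ≠ 0 := by intro h; linarith
  field_simp
  linarith [hmain]

theorem geo_sum_inv {α : ℝ} (hα : 1 < α) (j : ℕ) :
    ∑ k ∈ Finset.Ico 1 (j+1), α ^ (-(k:ℤ)) = (1 - α ^ (-(j:ℤ))) / (α - 1) := by
  have hα0 : (0:ℝ) < α := by linarith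
  have hinv : ∀ k : ℕ, α ^ (-(k:ℤ)) = (α⁻¹) ^ k := by
    intro k
    rw [_root_.zpow_neg, zpow_natCast, ← inv_pow]
  rw [Finset.sum_congr rfl (fun k _ => hinv k), geom_sum_Ico (by
    intro h
    have : α = 1 := by
      field_simp at h
      linarith [h]
    linarith) (by omega : 1 ≤ j+1)]
  rw [hinv j]
  have h1 : α⁻¹ - 1 ≠ 0 := by
    intro h
    have h' : α⁻¹ = 1 := by linarith
    rw [inv_eq_one] at h'
    linarith
  have h2 : α - 1 ≠ 0 := by intro h; linarith
  have hane : α ≠ 0 := by linarith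
  rw [pow_succ, pow_one, div_eq_div_iff h1 h2]
  field_simp
  ring
end AuxBC4

set_option maxHeartbeats 1000000 in
/-- Under Assumption (A), `r(n−1) < (3/7)(1 − 1/α)`, and `r(n−1) ≤ 1/10`, for every sign
vector `s` the first component of `f(Q^(s))` equals `C₁P^(s)₂/(C₁ − P^(s)₁) + 1` and is
positive. -/
theorem stmt_12 (n : ℕ) (hn : 2 ≤ n) (aL aR : Fin n → ℝ) (α β r : ℝ)
    (hA : assumptionA n aL aR α β r)
    (h1 : r * ((n : ℝ) - 1) < 3 / 7 * (1 - 1 / α))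
    (h2 : r * ((n : ℝ) - 1) ≤ 1 / 10)
    (s : Fin (n - 1) → ℝ) (hs : ∀ j, s j = 1 ∨ s j = -1)
    (P : Fin n → ℝ) (hP : isVertexP n aL α r s P) :
    bcf n aL aR
        (fun i => if (i : ℕ) = 0 then 0 else
          Cfirst n aL aR α / (Cfirst n aL aR α - P ⟨0, by omega⟩) * P i)
        ⟨0, by omega⟩ =
      Cfirst n aL aR α * P ⟨1, by omega⟩ / (Cfirst n aL aR α - P ⟨0, by omega⟩) + 1 ∧
    0 < Cfirst n aL aR α * P ⟨1, by omega⟩ / (Cfirst n aL aR α - P ⟨0, by omega⟩) + 1 := by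
  obtain ⟨hα, hβ, hr0, hr1, hsL, hsR⟩ := hA
  have hn1 : 1 ≤ n := by omega
  have hα0 : (0:ℝ) < α := by linarith
  constructor
  · -- the equality
    have hcond : ∀ i : Fin n, (i:ℕ) = 0 →
        (fun i : Fin n => if (i : ℕ) = 0 then (0:ℝ) else
          Cfirst n aL aR α / (Cfirst n aL aR α - P ⟨0, by omega⟩) * P i) i ≤ 0 := by
      intro i hi
      simp [hi]
    rw [bcf, if_pos hcond]
    have hmv : ((bcMat n aL).mulVec
        (fun i => if (i : ℕ) = 0 then 0 else
          Cfirst n aL aR α / (Cfirst n aL aR α - P ⟨0, by omega⟩) * P i)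
        + bcVec n) ⟨0, by omega⟩ =
        Cfirst n aL aR α / (Cfirst n aL aR α - P ⟨0, by omega⟩) * P ⟨1, by omega⟩ + 1 := by
      rw [Pi.add_apply, Matrix.mulVec, dotProduct]
      have hb : bcVec n ⟨0, by omega⟩ = 1 := by simp [bcVec]
      rw [hb]
      congr 1
      rw [Finset.sum_eq_single (⟨1, by omega⟩ : Fin n)]
      · have hne : ¬ (((⟨1, by omega⟩ : Fin n) : ℕ) = 0) := by simp
        simp only [bcMat, Matrix.of_apply]
        norm_num
      · intro b _ hb1
        by_cases hb0 : (b:ℕ) = 0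
        · simp [hb0]
        · have hbne1 : ¬ ((b:ℕ) = 0 + 1) := by
            intro h
            exact hb1 (Fin.ext (by simpa using h))
          simp only [bcMat, Matrix.of_apply]
          have h00 : ((⟨0, by omega⟩ : Fin n) : ℕ) = 0 := rfl
          rw [h00] at *
          simp [hb0, hbne1]
      · intro hmem
        exact absurd (Finset.mem_univ _) hmem
    rw [hmv, div_mul_eq_mul_div, mul_comm]
  · -- positivity
    obtain ⟨hE, hPc⟩ := hP
    have hαne : α ≠ 0 := ne_of_gt hα0
    have hα1 : (0:ℝ) < α - 1 := by linarith
    have hα1ne : α - 1 ≠ 0 := ne_of_gt hα1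
    have hm1 : (1:ℝ) ≤ (n:ℝ) - 1 := by
      have : (2:ℝ) ≤ (n:ℝ) := by exact_mod_cast hn
      linarith
    have hcast : ((n-1 : ℕ):ℝ) = (n:ℝ) - 1 := by
      rw [Nat.cast_sub hn1]; simp
    -- power splitting
    have hsplitpow : ∀ i : Fin n, α ^ (n - 1 - (i:ℕ)) = α ^ (n-1) * α ^ (-((i:ℕ):ℤ)) := by
      intro i
      have hadd : α ^ (n-1) = α ^ (n - 1 - (i:ℕ)) * α ^ (i:ℕ) := by
        rw [← pow_add]; congr 1; have := i.isLt; omega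
      have hz : α ^ (-((i:ℕ):ℤ)) = (α ^ (i:ℕ))⁻¹ := by
        rw [_root_.zpow_neg, zpow_natCast]
      rw [hz, hadd]
      field_simp
    have hpown : α ^ n = α ^ (n-1) * α := by
      rw [← pow_succ]; congr 1; omega
    have hpowpos : (0:ℝ) < α ^ (n-1) := pow_pos hα0 _
    -- D = denominator
    set D : ℝ := ∑ i : Fin n, α ^ (-((i:ℕ):ℤ)) * aR i with hD
    have hsumR : ∑ i : Fin n, aR i * α ^ (n - 1 - (i:ℕ)) = α ^ (n-1) * D := by
      rw [hD, Finset.mul_sum]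
      exact Finset.sum_congr rfl (fun i _ => by rw [hsplitpow i]; ring)
    -- Bernoulli bound
    have hy : (0:ℝ) < r / α := div_pos hr0 hα0
    have hy1 : r / α < 1 := by
      rw [div_lt_one hα0]; linarith
    have hber : 1 - ((n:ℝ)-1) * (r/α) ≤ (1 - r/α) ^ (n-1) := by
      have h := one_add_mul_le_pow (a := -(r/α)) (by linarith : (-2:ℝ) ≤ -(r/α)) (n-1)
      have he : (1 + -(r/α)) = 1 - r/α := by ring
      rw [he, hcast] at h
      linarith
    -- D > 0
    have hDpos : (0:ℝ) < D := by
      have hge := evalR_ge hn1 hsR hα (by linarith : (0:ℝ) < β) hr0 hr1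
      rw [hsumR] at hge
      have hps : (α - r) ^ (n-1) = α ^ (n-1) * (1 - r/α) ^ (n-1) := by
        rw [← mul_pow]
        congr 1
        field_simp
      rw [hps] at hge
      -- (α+β)(1-r/α)^{n-1} > α
      have hw0 : (0:ℝ) ≤ (1 - r/α) ^ (n-1) := pow_nonneg (by linarith) _
      have hkey : α < (α + β) * (1 - r/α) ^ (n-1) := by
        have hb1 : (α + 1) * (1 - ((n:ℝ)-1) * (r/α)) ≤ (α + β) * (1 - r/α) ^ (n-1) := by
          have e1 : (α + 1) * (1 - ((n:ℝ)-1) * (r/α)) ≤ (α + 1) * (1 - r/α) ^ (n-1) := by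
            nlinarith
          have e2 : (α + 1) * (1 - r/α) ^ (n-1) ≤ (α + β) * (1 - r/α) ^ (n-1) := by
            nlinarith
          linarith
        have hmr : ((n:ℝ)-1) * (r/α) * α = r * ((n:ℝ)-1) := by field_simp
        nlinarith [h1, hα1, mul_pos hα0 hα0]
      nlinarith [hpowpos, hge, hpown, hkey]
    -- C1 formula
    have hΔ := det_one_sub_bcMat n hn1 aL
    have hΔne := det_one_sub_ne hn1 hα hr1 hsL
    have haL := sum_aL_alpha hn1 hsL
    have haLz : ∑ i : Fin n, aL i * α ^ (-((i:ℕ):ℤ)) = -α := by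
      have h3 : ∑ i : Fin n, aL i * α ^ (n-1-(i:ℕ)) =
          α ^ (n-1) * ∑ i : Fin n, aL i * α ^ (-((i:ℕ):ℤ)) := by
        rw [Finset.mul_sum]
        exact Finset.sum_congr rfl (fun i _ => by rw [hsplitpow i]; ring)
      rw [haL, hpown] at h3
      have := mul_left_cancel₀ (ne_of_gt hpowpos) (by linarith [h3] : α ^ (n-1) * (-α) = α ^ (n-1) * ∑ i : Fin n, aL i * α ^ (-((i:ℕ):ℤ)))
      linarith [this]
    have hC1 : Cfirst n aL aR α = (α/(α-1)) / D := by
      have key : ∀ j : Fin n, (∑ k : Fin n, if 1 ≤ (k:ℕ) then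
          (if (k:ℕ) ≤ (j:ℕ) then α ^ (-((k:ℕ):ℤ)) * aL j else 0) else 0)
          = aL j * ((1 - α ^ (-((j:ℕ):ℤ)))/(α-1)) := by
        intro j
        have h1 : ∀ k : Fin n, (if 1 ≤ (k:ℕ) then
            (if (k:ℕ) ≤ (j:ℕ) then α ^ (-((k:ℕ):ℤ)) * aL j else 0) else 0)
            = (fun m : ℕ => (if 1 ≤ m ∧ m ≤ (j:ℕ) then α ^ (-(m:ℤ)) else 0) * aL j) (k:ℕ) := by
          intro k
          by_cases hk1 : 1 ≤ (k:ℕ) <;> by_cases hk2 : (k:ℕ) ≤ (j:ℕ) <;>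
            simp [hk1, hk2]
        rw [Finset.sum_congr rfl (fun k _ => h1 k),
          Fin.sum_univ_eq_sum_range (fun m => (if 1 ≤ m ∧ m ≤ (j:ℕ) then α ^ (-(m:ℤ)) else 0) * aL j) n,
          ← Finset.sum_mul]
        have h2 : ∑ m ∈ Finset.range n, (if 1 ≤ m ∧ m ≤ (j:ℕ) then α ^ (-(m:ℤ)) else 0)
            = ∑ m ∈ Finset.Ico 1 ((j:ℕ)+1), α ^ (-(m:ℤ)) := by
          rw [← Finset.sum_filter]
          congr 1
          ext m
          simp only [Finset.mem_filter, Finset.mem_range, Finset.mem_Ico]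
          have := j.isLt
          omega
        rw [h2, geo_sum_inv hα (j:ℕ)]
        ring
      have hS : (∑ k ∈ Finset.univ.filter (fun k : Fin n => 1 ≤ (k:ℕ)),
          α ^ (-((k:ℕ):ℤ)) * ∑ j ∈ Finset.univ.filter (fun j : Fin n => (k:ℕ) ≤ (j:ℕ)), aL j)
          = ((1 - bcMat n aL).det - 1 + α)/(α-1) := by
        calc (∑ k ∈ Finset.univ.filter (fun k : Fin n => 1 ≤ (k:ℕ)),
            α ^ (-((k:ℕ):ℤ)) * ∑ j ∈ Finset.univ.filter (fun j : Fin n => (k:ℕ) ≤ (j:ℕ)), aL j)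
            = ∑ k : Fin n, (if 1 ≤ (k:ℕ) then
                α ^ (-((k:ℕ):ℤ)) * ∑ j : Fin n, (if (k:ℕ) ≤ (j:ℕ) then aL j else 0) else 0) := by
              rw [Finset.sum_filter]
              exact Finset.sum_congr rfl (fun k _ => by rw [Finset.sum_filter])
          _ = ∑ k : Fin n, ∑ j : Fin n, (if 1 ≤ (k:ℕ) then
                (if (k:ℕ) ≤ (j:ℕ) then α ^ (-((k:ℕ):ℤ)) * aL j else 0) else 0) := by
              refine Finset.sum_congr rfl (fun k _ => ?_)
              by_cases hk : 1 ≤ (k:ℕ)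
              · rw [if_pos hk, Finset.mul_sum]
                refine Finset.sum_congr rfl (fun j _ => ?_)
                rw [if_pos hk]
                by_cases hkj : (k:ℕ) ≤ (j:ℕ) <;> simp [hkj]
              · rw [if_neg hk]
                simp [hk]
          _ = ∑ j : Fin n, ∑ k : Fin n, (if 1 ≤ (k:ℕ) then
                (if (k:ℕ) ≤ (j:ℕ) then α ^ (-((k:ℕ):ℤ)) * aL j else 0) else 0) := Finset.sum_comm
          _ = ∑ j : Fin n, aL j * ((1 - α ^ (-((j:ℕ):ℤ)))/(α-1)) :=
              Finset.sum_congr rfl (fun j _ => key j)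
          _ = (∑ j : Fin n, (aL j - aL j * α ^ (-((j:ℕ):ℤ))))/(α-1) := by
              rw [Finset.sum_div]
              exact Finset.sum_congr rfl (fun j _ => by ring)
          _ = ((∑ j : Fin n, aL j) - ∑ j : Fin n, aL j * α ^ (-((j:ℕ):ℤ)))/(α-1) := by
              rw [Finset.sum_sub_distrib]
          _ = ((1 - bcMat n aL).det - 1 + α)/(α-1) := by
              rw [haLz]
              have hsum : ∑ j : Fin n, aL j = (1 - bcMat n aL).det - 1 := by
                rw [hΔ]; ring
              rw [hsum]
              ring_nf
      rw [Cfirst, hS, ← hD]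
      congr 1
      field_simp
      ring
    -- P sum over hyperplane E
    have hPsum : ∑ i : Fin n, uvec n α i * P i = α ^ (n-1) / (1 - α) := by
      have hE' : ∑ i : Fin n, uvec n α i * (P i - Ypt n aL i) = 0 := hE
      have hsub : ∑ i : Fin n, uvec n α i * (P i - Ypt n aL i)
          = (∑ i : Fin n, uvec n α i * P i) - ∑ i : Fin n, uvec n α i * Ypt n aL i := by
        rw [← Finset.sum_sub_distrib]
        exact Finset.sum_congr rfl (fun i _ => by ring)
      have hY := uvec_dot_Ypt hn1 hα hr1 hsL
      rw [hsub, hY] at hE'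
      linarith
    set i0 : Fin n := ⟨0, by omega⟩ with hi0
    set i1 : Fin n := ⟨1, by omega⟩ with hi1
    set T : ℝ := ∑ i ∈ Finset.univ.filter (fun i : Fin n => 1 ≤ (i:ℕ)),
      α ^ (-((i:ℕ):ℤ)) * P i with hT
    have hfil : Finset.univ.filter (fun i : Fin n => ¬ 1 ≤ (i:ℕ)) = {i0} := by
      ext i
      simp only [Finset.mem_filter, Finset.mem_univ, true_and, Finset.mem_singleton,
        Fin.ext_iff, hi0]
      omega
    have hsplitgen : ∀ f : Fin n → ℝ, ∑ i : Fin n, f i =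
        (∑ i ∈ Finset.univ.filter (fun i : Fin n => 1 ≤ (i:ℕ)), f i) + f i0 := by
      intro f
      rw [← Finset.sum_filter_add_sum_filter_not Finset.univ (fun i : Fin n => 1 ≤ (i:ℕ)) f,
        hfil, Finset.sum_singleton]
    have hu0 : uvec n α i0 = α ^ (n-1) := by
      simp [uvec, hi0]
    have hP0 : P i0 = 1/(1-α) - T := by
      rw [hsplitgen (fun i => uvec n α i * P i)] at hPsum
      have hTsum : ∑ i ∈ Finset.univ.filter (fun i : Fin n => 1 ≤ (i:ℕ)),
          uvec n α i * P i = α ^ (n-1) * T := by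
        rw [hT, Finset.mul_sum]
        refine Finset.sum_congr rfl (fun i _ => ?_)
        simp only [uvec]
        rw [hsplitpow i]
        ring
      rw [hTsum, hu0] at hPsum
      have h4 : α^(n-1) * (T + P i0) = α^(n-1) * (1/(1-α)) := by
        rw [mul_one_div]
        linarith only [hPsum]
      have h5 := mul_left_cancel₀ (ne_of_gt hpowpos) h4
      linarith only [h5]
    -- bound on |P i| for i ≥ 1
    have habs_s : ∀ i : Fin n, ∀ hi : 1 ≤ (i:ℕ),
        |P i| = 2*α/(α-1) * (((n-1).choose (i:ℕ) : ℕ) : ℝ) * r^(i:ℕ) := by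
      intro i hi
      rw [hPc i hi, abs_mul]
      have hsj := hs ⟨(i:ℕ)-1, by have := i.isLt; omega⟩
      have h1' : |s ⟨(i:ℕ)-1, by have := i.isLt; omega⟩| = 1 := by
        rcases hsj with h|h <;> rw [h] <;> norm_num
      rw [h1', one_mul, abs_of_nonneg]
      exact mul_nonneg (mul_nonneg (div_nonneg (by linarith) (by linarith))
        (Nat.cast_nonneg _)) (pow_nonneg hr0.le _)
    -- binomial sum
    have hbinom : ∑ i : Fin n, (((n-1).choose (i:ℕ) : ℕ) : ℝ) * (r/α)^(i:ℕ)
        = (1 + r/α)^(n-1) := by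
      rw [Fin.sum_univ_eq_sum_range (fun m => (((n-1).choose m : ℕ) : ℝ) * (r/α)^m) n]
      have hap := add_pow (r/α) 1 (n-1)
      have hrange : Finset.range ((n-1)+1) = Finset.range n := by congr 1; omega
      rw [hrange] at hap
      have hap2 : (r/α + 1)^(n-1) = ∑ m ∈ Finset.range n, (((n-1).choose m : ℕ) : ℝ) * (r/α)^m := by
        rw [hap]
        exact Finset.sum_congr rfl (fun m _ => by rw [one_pow]; ring)
      rw [← hap2]
      ring_nf
    -- |T| bound
    have hTbound : |T| ≤ 2*α/(α-1) * ((1 + r/α)^(n-1) - 1) := by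
      have hstep1 : |T| ≤ ∑ i ∈ Finset.univ.filter (fun i : Fin n => 1 ≤ (i:ℕ)),
          |α ^ (-((i:ℕ):ℤ)) * P i| := by
        rw [hT]
        exact Finset.abs_sum_le_sum_abs _ _
      have hstep2 : ∀ i : Fin n, 1 ≤ (i:ℕ) → |α ^ (-((i:ℕ):ℤ)) * P i|
          = 2*α/(α-1) * (((n-1).choose (i:ℕ) : ℕ) : ℝ) * (r/α)^(i:ℕ) := by
        intro i hi
        rw [abs_mul, habs_s i hi]
        have hzp : α ^ (-((i:ℕ):ℤ)) = (α ^ (i:ℕ))⁻¹ := by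
          rw [_root_.zpow_neg, zpow_natCast]
        have habsz : |α ^ (-((i:ℕ):ℤ))| = (α ^ (i:ℕ))⁻¹ := by
          rw [hzp, abs_inv, abs_pow, abs_of_pos hα0]
        rw [habsz, div_pow]
        ring
      have hstep3 : ∑ i ∈ Finset.univ.filter (fun i : Fin n => 1 ≤ (i:ℕ)),
          |α ^ (-((i:ℕ):ℤ)) * P i|
          = ∑ i ∈ Finset.univ.filter (fun i : Fin n => 1 ≤ (i:ℕ)),
            2*α/(α-1) * ((((n-1).choose (i:ℕ) : ℕ) : ℝ) * (r/α)^(i:ℕ)) := by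
        refine Finset.sum_congr rfl (fun i hi => ?_)
        rw [hstep2 i (Finset.mem_filter.mp hi).2]
        ring
      have hstep4 : ∑ i ∈ Finset.univ.filter (fun i : Fin n => 1 ≤ (i:ℕ)),
          (((n-1).choose (i:ℕ) : ℕ) : ℝ) * (r/α)^(i:ℕ) = (1 + r/α)^(n-1) - 1 := by
        have := hsplitgen (fun i : Fin n => (((n-1).choose (i:ℕ) : ℕ) : ℝ) * (r/α)^(i:ℕ))
        rw [hbinom] at this
        have hi0v : (((n-1).choose ((i0:Fin n):ℕ) : ℕ) : ℝ) * (r/α)^((i0: Fin n):ℕ) = 1 := by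
          simp [hi0]
        rw [hi0v] at this
        linarith
      rw [hstep3, ← Finset.mul_sum, hstep4] at hstep1
      exact hstep1
    -- elementary estimate
    have hy0 : (0:ℝ) ≤ r/α := hy.le
    have hmy : ((n:ℝ)-1) * (r/α) ≤ 1/10 := by
      have hd : ((n:ℝ)-1) * (r/α) = (r * ((n:ℝ)-1))/α := by ring
      rw [hd]
      calc (r * ((n:ℝ)-1))/α ≤ r * ((n:ℝ)-1) := by
            apply div_le_self (mul_nonneg hr0.le (by linarith only [hm1])) (by linarith only [hα])
        _ ≤ 1/10 := h2
    have hgeo : (1 + r/α)^(n-1) - 1 ≤ (10/9) * (((n:ℝ)-1) * (r/α)) := by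
      have hprod : (1+r/α)^(n-1) * (1-r/α)^(n-1) ≤ 1 := by
        rw [← mul_pow]
        have h4 : (1+r/α)*(1-r/α) = 1 - (r/α)^2 := by ring
        rw [h4]
        apply pow_le_one₀ (by nlinarith only [hy, hy1]) (by nlinarith only [sq_nonneg (r/α)])
      have hpos2 : (0:ℝ) < 1 - ((n:ℝ)-1)*(r/α) := by linarith only [hmy]
      have h1y : (0:ℝ) < (1+r/α)^(n-1) := pow_pos (by linarith only [hy]) _
      have h5 : (1+r/α)^(n-1) * (1 - ((n:ℝ)-1)*(r/α)) ≤ 1 := by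
        nlinarith only [hber, h1y, hprod]
      nlinarith only [h5, hpos2, hmy, mul_nonneg (by linarith only [hm1] : (0:ℝ) ≤ (n:ℝ)-1) hy0]
    have hTlt : |T| < 20/(21*α) := by
      have hc2 : (0:ℝ) < 2*α/(α-1) := div_pos (by linarith only [hα0]) hα1
      have hmr : ((n:ℝ)-1) * (r/α) = (r*((n:ℝ)-1))/α := by ring
      have hub : 2*α/(α-1) * ((1 + r/α)^(n-1) - 1) ≤ (20/9) * (r*((n:ℝ)-1))/(α-1) := by
        have := mul_le_mul_of_nonneg_left hgeo hc2.le
        calc 2*α/(α-1) * ((1 + r/α)^(n-1) - 1)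
            ≤ 2*α/(α-1) * ((10/9) * (((n:ℝ)-1) * (r/α))) := this
          _ = (20/9) * (r*((n:ℝ)-1))/(α-1) := by field_simp; ring
      have hlast : (20/9) * (r*((n:ℝ)-1))/(α-1) < 20/(21*α) := by
        rw [div_lt_div_iff₀ hα1 (by linarith : (0:ℝ) < 21*α)]
        have h1' : r*((n:ℝ)-1) < 3/7*(1-1/α) := h1
        have h1'' : 1 - 1/α = (α-1)/α := by field_simp
        rw [h1''] at h1'
        have h1''' : r*((n:ℝ)-1)*α < 3/7*(α-1) := by
          have hid : (α-1)/α*α = α-1 := div_mul_cancel₀ _ hαne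
          have hmm := mul_lt_mul_of_pos_right h1' hα0
          nlinarith only [hmm, hid, hα0, hα1]
        linarith only [h1''']
      linarith only [hTbound, hub, hlast]
    -- P i0 < 0
    have hP0' : P i0 = -(1/(α-1)) - T := by
      rw [hP0]
      have he : (1:ℝ)/(1-α) = -(1/(α-1)) := by
        rw [show (1:ℝ)-α = -(α-1) by ring, div_neg]
      rw [he]
    have hd20 : 20/(21*α) < 1/(α-1) := by
      rw [div_lt_div_iff₀ (by linarith only [hα0] : (0:ℝ) < 21*α) hα1]
      linarith only [hα]
    have hP0neg : P i0 < 0 := by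
      have h8 := neg_abs_le T
      rw [hP0']
      linarith only [h8, hTlt, hd20]
    -- |P i1| < 6/7
    have hP1abs : |P i1| = 2*α/(α-1) * (((n:ℝ)-1) * r) := by
      have h5 := habs_s i1 (by simp [hi1])
      rw [h5]
      have hch : ((n-1).choose ((i1 : Fin n):ℕ)) = n - 1 := by
        simp [hi1, Nat.choose_one_right]
      rw [hch, hcast]
      have hpow1 : r ^ ((i1 : Fin n):ℕ) = r := by simp [hi1]
      rw [hpow1]
      ring
    have hP1lt : |P i1| < 6/7 := by
      rw [hP1abs]
      have hc2 : (0:ℝ) < 2*α/(α-1) := div_pos (by linarith only [hα0]) hα1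
      have heq67 : 2*α/(α-1) * (3/7*(1-1/α)) = 6/7 := by
        field_simp
        ring
      calc 2*α/(α-1) * (((n:ℝ)-1) * r) < 2*α/(α-1) * (3/7*(1-1/α)) := by
            apply mul_lt_mul_of_pos_left _ hc2
            calc ((n:ℝ)-1) * r = r * ((n:ℝ)-1) := by ring
              _ < 3/7*(1-1/α) := h1
        _ = 6/7 := heq67
    -- conclusion
    have hC1pos : 0 < Cfirst n aL aR α := by
      rw [hC1]
      exact div_pos (div_pos hα0 hα1) hDpos
    have hden : 0 < Cfirst n aL aR α - P i0 := by linarith only [hC1pos, hP0neg]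
    have hq0 : 0 < Cfirst n aL aR α / (Cfirst n aL aR α - P i0) := div_pos hC1pos hden
    have hq1 : Cfirst n aL aR α / (Cfirst n aL aR α - P i0) < 1 :=
      (div_lt_one hden).mpr (by linarith only [hP0neg])
    have heqq : Cfirst n aL aR α * P i1 / (Cfirst n aL aR α - P i0)
        = (Cfirst n aL aR α / (Cfirst n aL aR α - P i0)) * P i1 := by
      rw [mul_div_right_comm]
    have hfinal : 0 < Cfirst n aL aR α * P i1 / (Cfirst n aL aR α - P i0) + 1 := by
      rw [heqq]
      set q := Cfirst n aL aR α / (Cfirst n aL aR α - P i0) with hq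
      have h6 : -(q * |P i1|) ≤ q * P i1 := by nlinarith only [neg_abs_le (P i1), hq0]
      have h7 : q * |P i1| ≤ |P i1| := by nlinarith only [abs_nonneg (P i1), hq1, hq0]
      linarith only [h6, h7, hP1lt]
    exact hfinal
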